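/- The ℚ-linear map from ℋ^{++} ⊗_ℚ ℚ[X,Y] to ℋ sending h ⊗ X^i Y^j to h * a^{*i} * b^{*j} (where a^{*i} and b^{*j} denote shuffle powers of the one-letter words a and b) is a vector-space isomorphism; equivalently, ℋ is the direct sum over i,j ≥ 0 of the subspaces ℋ^{++} * a^{*i} * b^{*j}. -/

import Mathlib

inductive Letter | a | b
deriving DecidableEq

abbrev Word := List Letter

/-- The algebra `ℋ`: formal `ℚ`-linear combinations of words. -/
abbrev H := Word →₀ ℚ

/-- The list of shuffles of two words (with multiplicity). -/
def shuffleList : Word → Word → List Word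
  | [], v => [v]
  | u, [] => [u]
  | x :: u, y :: v =>
      ((shuffleList u (y :: v)).map fun t => x :: t) ++
      ((shuffleList (x :: u) v).map fun t => y :: t)
termination_by u v => u.length + v.length
decreasing_by all_goals simp

/-- The shuffle product `u * v` of two words, as an element of `ℋ`. -/
noncomputable def shW (u v : Word) : H :=
  ((shuffleList u v).map fun t => Finsupp.single t (1 : ℚ)).sum

/-- The shuffle product of a word with an element of `ℋ`, extended linearly. -/
noncomputable def shWH (u : Word) (g : H) : H := g.sum fun v cv => cv • shW u v

/-- Concatenation of a word with an element of `ℋ`, extended linearly. -/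
noncomputable def concatWH (u : Word) (g : H) : H :=
  g.sum fun v c => Finsupp.single (u ++ v) c

/-- The list of all words of length `m`. -/
def wordsOfLength : ℕ → List Word
  | 0 => [[]]
  | n + 1 =>
      ((wordsOfLength n).map fun t => Letter.a :: t) ++
      ((wordsOfLength n).map fun t => Letter.b :: t)

/-- `(a+b)^m`, the `m`-fold concatenation power of `a+b` expanded multilinearly:
the sum of all words of length `m`. -/
noncomputable def abPow (m : ℕ) : H :=
  ((wordsOfLength m).map fun t => Finsupp.single t (1 : ℚ)).sum

/-- `(b-a)^m`, the `m`-fold concatenation power of `b-a` expanded multilinearly: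
the signed sum of all words of length `m`. -/
noncomputable def bmaPow (m : ℕ) : H :=
  ((wordsOfLength m).map fun t =>
    Finsupp.single t ((-1 : ℚ) ^ t.count Letter.a)).sum

/-- `W⁺⁺` : words not beginning with `b` and not ending with `a`. -/
def WPlusPlus (w : Word) : Prop := w.head? ≠ some Letter.b ∧ w.getLast? ≠ some Letter.a

/-- The shuffle product on `ℋ`, extended bilinearly from words. -/
noncomputable def shH (f g : H) : H :=
  f.sum fun u cu => g.sum fun v cv => (cu * cv) • shW u v

/-- `h^{*k}` : the `k`-fold shuffle power of `h ∈ ℋ`. -/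
noncomputable def shPow (h : H) : ℕ → H
  | 0 => Finsupp.single [] 1
  | n + 1 => shH (shPow h n) h

/-- The subspace `ℋ⁺⁺ * a^{*i} * b^{*j}` of `ℋ`: the span of the shuffle products of
the basis words of `ℋ⁺⁺` with the shuffle powers `a^{*i}` and `b^{*j}`. -/
noncomputable def SHab (p : ℕ × ℕ) : Submodule ℚ H :=
  Submodule.span ℚ
    {x : H | ∃ w : Word, WPlusPlus w ∧
      x = shH (shH (Finsupp.single w 1) (shPow (Finsupp.single [Letter.a] 1) p.1))
            (shPow (Finsupp.single [Letter.b] 1) p.2)}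

namespace Aux

abbrev rep (n : ℕ) (c : Letter) : Word := List.replicate n c

def trailA : Word → ℕ
  | [] => 0
  | x :: t => if x = Letter.a ∧ trailA t = t.length then t.length + 1 else trailA t

def leadB : Word → ℕ
  | Letter.b :: t => leadB t + 1
  | _ => 0

@[simp] lemma trailA_nil : trailA [] = 0 := rfl

lemma trailA_cons (x t) : trailA (x :: t) =
    if x = Letter.a ∧ trailA t = t.length then t.length + 1 else trailA t := by
  rfl

@[simp] lemma trailA_cons_b (t) : trailA (Letter.b :: t) = trailA t := by
  simp [trailA_cons]

lemma trailA_le_length (t : Word) : trailA t ≤ t.length := by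
  induction t with
  | nil => simp
  | cons x t ih => rw [trailA_cons]; split <;> simp [Nat.succ_le_succ, Nat.le_succ_of_le ih]

lemma trailA_eq_length_iff {t : Word} :
    trailA t = t.length ↔ t = List.replicate t.length Letter.a := by
  induction t with
  | nil => simp
  | cons x t ih =>
    rw [trailA_cons]
    split
    · rename_i h
      have ht := ih.mp h.2
      simp only [List.length_cons, List.replicate_succ, h.1, List.cons.injEq, true_and]
      simpa using ht
    · rename_i h
      constructor
      · intro he
        have := trailA_le_length t
        simp only [List.length_cons] at he
        omega
      · intro he
        rw [List.length_cons, List.replicate_succ] at he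
        obtain ⟨rfl, ht⟩ := List.cons_eq_cons.mp he
        exact absurd ⟨rfl, ih.mpr ht⟩ h

lemma getLast?_replicate_succ (k : ℕ) (c : Letter) :
    (List.replicate (k+1) c).getLast? = some c := by
  rw [List.replicate_succ']
  simp

@[simp] lemma trailA_replicate (k : ℕ) : trailA (rep k Letter.a) = k := by
  induction k with
  | zero => simp
  | succ k ih =>
    have h : rep (k+1) Letter.a = Letter.a :: rep k Letter.a := List.replicate_succ ..
    rw [h, trailA_cons]
    by_cases hk : trailA (rep k Letter.a) = (rep k Letter.a).length
    · rw [if_pos ⟨rfl, hk⟩]; simp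
    · exact absurd (by simpa using ih) hk

lemma trailA_append_replicate (s : Word) (k : ℕ) :
    trailA (s ++ rep k Letter.a) = trailA s + k := by
  induction s with
  | nil => simp
  | cons x s ih =>
    rw [List.cons_append, trailA_cons, trailA_cons, ih]
    by_cases hx : x = Letter.a
    · simp only [hx, true_and, List.length_append, List.length_replicate]
      by_cases hs : trailA s = s.length
      · rw [if_pos (by omega), if_pos hs]; omega
      · rw [if_neg (by omega), if_neg hs]
    · simp [hx]

lemma trailA_eq_zero_iff {s : Word} : trailA s = 0 ↔ s.getLast? ≠ some Letter.a := by
  induction s with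
  | nil => simp
  | cons x s ih =>
    rw [trailA_cons]
    cases s with
    | nil =>
      cases x <;> simp
    | cons y s' =>
      rw [List.getLast?_cons_cons]
      split
      · rename_i h
        have hrep := trailA_eq_length_iff.mp h.2
        simp only [Nat.succ_ne_zero, false_iff, not_not]
        rw [hrep, List.length_cons]
        exact getLast?_replicate_succ _ _
      · exact ih

@[simp] lemma leadB_nil : leadB [] = 0 := rfl
@[simp] lemma leadB_cons_a (t) : leadB (Letter.a :: t) = 0 := rfl
@[simp] lemma leadB_cons_b (t) : leadB (Letter.b :: t) = leadB t + 1 := rfl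

lemma leadB_eq_zero_iff {s : Word} : leadB s = 0 ↔ s.head? ≠ some Letter.b := by
  cases s with
  | nil => simp
  | cons x t => cases x <;> simp

@[simp] lemma leadB_replicate (k : ℕ) : leadB (rep k Letter.b) = k := by
  induction k with
  | zero => simp
  | succ k ih => simp [List.replicate_succ, ih]

lemma leadB_append_replicate (s : Word) (j : ℕ) :
    leadB (rep j Letter.b ++ s) = j + leadB s := by
  induction j with
  | zero => simp
  | succ j ih => simp [List.replicate_succ, ih]; omega

end Aux

namespace Aux

@[simp] lemma shuffleList_nil_left (v : Word) : shuffleList [] v = [v] := by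
  rw [shuffleList]

@[simp] lemma shuffleList_nil_right (u : Word) : shuffleList u [] = [u] := by
  cases u with
  | nil => rw [shuffleList]
  | cons x u =>
    rw [shuffleList]
    simp

lemma shuffleList_cons_cons (x y : Letter) (u v : Word) :
    shuffleList (x :: u) (y :: v) =
      ((shuffleList u (y :: v)).map fun t => x :: t) ++
      ((shuffleList (x :: u) v).map fun t => y :: t) := by
  rw [shuffleList]

lemma perm_of_mem_shuffleList : ∀ (u v : Word), ∀ t ∈ shuffleList u v, t.Perm (u ++ v)
  | [], v => by simp
  | x :: u, [] => by simp
  | x :: u, y :: v => by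
    intro t ht
    rw [shuffleList_cons_cons] at ht
    rcases List.mem_append.mp ht with h | h
    · obtain ⟨t₁, ht₁, rfl⟩ := List.mem_map.mp h
      exact List.Perm.cons x (perm_of_mem_shuffleList u (y :: v) t₁ ht₁)
    · obtain ⟨t₂, ht₂, rfl⟩ := List.mem_map.mp h
      have := List.Perm.cons y (perm_of_mem_shuffleList (x :: u) v t₂ ht₂)
      exact this.trans (List.perm_middle).symm
termination_by u v => u.length + v.length
decreasing_by all_goals simp

lemma length_of_mem_shuffleList {u v t : Word} (h : t ∈ shuffleList u v) :
    t.length = u.length + v.length := by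
  have := (perm_of_mem_shuffleList u v t h).length_eq
  simpa using this

lemma head?_of_mem_shuffleList : ∀ (u v : Word), ∀ t ∈ shuffleList u v,
    t.head? = u.head? ∨ t.head? = v.head?
  | [], v => by simp
  | x :: u, [] => by simp
  | x :: u, y :: v => by
    intro t ht
    rw [shuffleList_cons_cons] at ht
    rcases List.mem_append.mp ht with h | h
    · obtain ⟨t₁, _, rfl⟩ := List.mem_map.mp h
      exact Or.inl rfl
    · obtain ⟨t₂, _, rfl⟩ := List.mem_map.mp h
      exact Or.inr rfl

lemma trailA_le_trailA_cons (x : Letter) (t : Word) : trailA t ≤ trailA (x :: t) := by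
  rw [trailA_cons]; split
  · exact Nat.le_succ_of_le (trailA_le_length t)
  · exact le_rfl

lemma trailA_cons_le (x : Letter) (t : Word) : trailA (x :: t) ≤ trailA t + 1 := by
  rw [trailA_cons]; split
  · rename_i h; omega
  · omega

@[simp] lemma trailA_replicate_b (j : ℕ) : trailA (rep j Letter.b) = 0 := by
  induction j with
  | zero => simp
  | succ j ih =>
    have : rep (j+1) Letter.b = Letter.b :: rep j Letter.b := List.replicate_succ ..
    rw [this, trailA_cons_b, ih]

lemma b_mem_of_mem_shuffle_b {t : Word} {j : ℕ} (hj : 0 < j) {v : Word}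
    (hv : v ∈ shuffleList t (rep j Letter.b)) : Letter.b ∈ v := by
  have hperm := perm_of_mem_shuffleList t (rep j Letter.b) v hv
  have : Letter.b ∈ t ++ rep j Letter.b := by
    apply List.mem_append_right
    exact List.mem_replicate.mpr ⟨by omega, rfl⟩
  exact hperm.mem_iff.mpr this

lemma not_allA_of_b_mem {v : Word} (h : Letter.b ∈ v) : trailA v ≠ v.length := by
  intro hh
  have := (List.eq_replicate_iff.mp (trailA_eq_length_iff.mp hh)).2 Letter.b h
  exact Letter.noConfusion this

/-- A_gen : bound on trailing a's for shuffles with a power of `a`. -/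
lemma trailA_shuffle_a_le : ∀ (w : Word) (i : ℕ),
    ∀ t ∈ shuffleList w (rep i Letter.a), trailA t ≤ i + trailA w
  | [], i => by
    intro t ht
    rw [shuffleList_nil_left, List.mem_singleton] at ht
    subst ht
    simp [trailA_replicate]
  | x :: w', 0 => by
    intro t ht
    rw [show rep 0 Letter.a = [] from rfl, shuffleList_nil_right, List.mem_singleton] at ht
    subst ht
    simp
  | x :: w', i + 1 => by
    intro t ht
    rw [show rep (i+1) Letter.a = Letter.a :: rep i Letter.a from List.replicate_succ ..,
      shuffleList_cons_cons] at ht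
    rcases List.mem_append.mp ht with h | h
    · obtain ⟨t₁, ht₁, rfl⟩ := List.mem_map.mp h
      have ih := trailA_shuffle_a_le w' (i+1) t₁ (by
        rwa [show Letter.a :: rep i Letter.a = rep (i+1) Letter.a from (List.replicate_succ ..).symm] at ht₁)
      rw [trailA_cons]
      split
      · rename_i hcond
        -- t₁ is all a's, so w' is all a's too
        have ht₁rep := trailA_eq_length_iff.mp hcond.2
        have hperm := perm_of_mem_shuffleList w' (rep (i+1) Letter.a) t₁ (by
          rwa [show Letter.a :: rep i Letter.a = rep (i+1) Letter.a from (List.replicate_succ ..).symm] at ht₁)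
        have hall : ∀ c ∈ w', c = Letter.a := by
          intro c hc
          exact (List.eq_replicate_iff.mp ht₁rep).2 c (hperm.mem_iff.mpr (List.mem_append_left _ hc))
        have hw' : trailA w' = w'.length :=
          trailA_eq_length_iff.mpr (List.eq_replicate_iff.mpr ⟨rfl, hall⟩)
        have hlen : t₁.length = w'.length + (i+1) := by
          have := hperm.length_eq; simpa using this
        rw [trailA_cons, if_pos ⟨hcond.1, hw'⟩]
        omega
      · have := trailA_le_trailA_cons x w'
        omega
    · obtain ⟨t₂, ht₂, rfl⟩ := List.mem_map.mp h
      have ih := trailA_shuffle_a_le (x :: w') i t₂ ht₂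
      have := trailA_cons_le Letter.a t₂
      omega
termination_by w i => w.length + i
decreasing_by all_goals simp

lemma count_map_cons (c : Letter) (L : List Word) (t : Word) :
    (L.map fun s => c :: s).count (c :: t) = L.count t := by
  induction L with
  | nil => rfl
  | cons s L ih => simp [List.count_cons, ih]

end Aux

namespace Aux

lemma trailA_cons_of_ne {x : Letter} {t : Word} (h : ¬(x = Letter.a ∧ trailA t = t.length)) :
    trailA (x :: t) = trailA t := by
  rw [trailA_cons, if_neg h]

lemma trailA_zero_cons {x : Letter} {w : Word} (h : trailA (x :: w) = 0) : trailA w = 0 := by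
  rw [trailA_cons] at h
  split at h
  · omega
  · exact h

/-- A_eq : the unique maximal term in `w * a^i`. -/
lemma shuffle_a_max : ∀ (w : Word), trailA w = 0 → ∀ (i : ℕ),
    (∀ t ∈ shuffleList w (rep i Letter.a), trailA t = i → t = w ++ rep i Letter.a)
    ∧ (shuffleList w (rep i Letter.a)).count (w ++ rep i Letter.a) = 1
  | [], _, i => by simp
  | x :: w', hw, 0 => by simp
  | x :: w', hw, i + 1 => by
    have hw' : trailA w' = 0 := trailA_zero_cons hw
    have hxa : ¬ (x = Letter.a ∧ trailA w' = w'.length) := by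
      intro hc
      rw [trailA_cons, if_pos hc] at hw
      omega
    have hrep : rep (i+1) Letter.a = Letter.a :: rep i Letter.a := List.replicate_succ ..
    have ih1 := shuffle_a_max w' hw' (i+1)
    have ih2gen := trailA_shuffle_a_le (x :: w') i
    constructor
    · intro t ht htt
      rw [hrep, shuffleList_cons_cons] at ht
      rcases List.mem_append.mp ht with h | h
      · obtain ⟨t₁, ht₁, rfl⟩ := List.mem_map.mp h
        rw [← hrep] at ht₁
        -- t₁ is not all a's impossible? We show trailA (x::t₁) = trailA t₁ unless t₁ all a's & x = a
        by_cases hcond : x = Letter.a ∧ trailA t₁ = t₁.length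
        · -- then w' is all a's, contradicting trailA w' = 0 unless w' = []
          exfalso
          have hperm := perm_of_mem_shuffleList w' (rep (i+1) Letter.a) t₁ ht₁
          have hall : ∀ c ∈ w', c = Letter.a := fun c hc =>
            (List.eq_replicate_iff.mp (trailA_eq_length_iff.mp hcond.2)).2 c
              (hperm.mem_iff.mpr (List.mem_append_left _ hc))
          cases w' with
          | nil => exact hxa ⟨hcond.1, by simp⟩
          | cons y w'' =>
            have : trailA (y :: w'') = (y :: w'').length :=
              trailA_eq_length_iff.mpr (List.eq_replicate_iff.mpr ⟨rfl, hall⟩)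
            rw [hw'] at this
            simp at this
        · rw [trailA_cons_of_ne hcond] at htt
          rw [(ih1.1 t₁ ht₁ htt)]
          simp
      · obtain ⟨t₂, ht₂, rfl⟩ := List.mem_map.mp h
        exfalso
        have hle := ih2gen t₂ ht₂
        rw [hw] at hle
        by_cases hcond : Letter.a = Letter.a ∧ trailA t₂ = t₂.length
        · -- t₂ all a's means x :: w' all a's, contradiction since trailA (x::w') = 0 and w' nonempty-or-x
          have hperm := perm_of_mem_shuffleList (x :: w') (rep i Letter.a) t₂ ht₂
          have hall : ∀ c ∈ (x :: w'), c = Letter.a := fun c hc =>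
            (List.eq_replicate_iff.mp (trailA_eq_length_iff.mp hcond.2)).2 c
              (hperm.mem_iff.mpr (List.mem_append_left _ hc))
          have : trailA (x :: w') = (x :: w').length :=
            trailA_eq_length_iff.mpr (List.eq_replicate_iff.mpr ⟨rfl, hall⟩)
          rw [hw] at this
          simp at this
        · rw [trailA_cons_of_ne hcond] at htt
          omega
    · -- count
      rw [hrep, shuffleList_cons_cons, List.count_append]
      have h1 : List.count (x :: w' ++ Letter.a :: rep i Letter.a)
          (List.map (fun t => x :: t) (shuffleList w' (Letter.a :: rep i Letter.a))) = 1 := by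
        refine (count_map_cons x _ (w' ++ Letter.a :: rep i Letter.a)).trans ?_
        rw [← hrep]
        exact (shuffle_a_max w' hw' (i+1)).2
      have h2 : List.count (x :: w' ++ Letter.a :: rep i Letter.a)
          (List.map (fun t => Letter.a :: t) (shuffleList (x :: w') (rep i Letter.a))) = 0 := by
        rw [List.count_eq_zero]
        intro hmem
        obtain ⟨t₂, ht₂, heq⟩ := List.mem_map.mp hmem
        have heq' : Letter.a :: t₂ = x :: (w' ++ Letter.a :: rep i Letter.a) := heq
        obtain ⟨hx, ht2eq⟩ := List.cons_eq_cons.mp heq'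
        have hta : trailA t₂ = i + 1 := by
          rw [ht2eq, show (Letter.a :: rep i Letter.a : Word) = rep (i+1) Letter.a from hrep.symm,
            trailA_append_replicate, hw']
          omega
        have hle := ih2gen t₂ ht₂
        rw [hw] at hle
        omega
      omega
termination_by w _ i => w.length + i
decreasing_by all_goals simp

/-- B_gen : shuffling with a power of `b` can only decrease trailing a's,
and bounds leading b's. -/
lemma shuffle_b_bound : ∀ (t : Word) (j : ℕ), ∀ v ∈ shuffleList t (rep j Letter.b),
    trailA v ≤ trailA t ∧ (trailA v = trailA t → leadB v ≤ j + leadB t)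
  | [], j => by
    intro v hv
    rw [shuffleList_nil_left, List.mem_singleton] at hv
    subst hv
    simp
  | x :: t', 0 => by
    intro v hv
    rw [show rep 0 Letter.b = [] from rfl, shuffleList_nil_right, List.mem_singleton] at hv
    subst hv
    exact ⟨le_rfl, fun _ => by omega⟩
  | x :: t', j + 1 => by
    intro v hv
    have hrep : rep (j+1) Letter.b = Letter.b :: rep j Letter.b := List.replicate_succ ..
    rw [hrep, shuffleList_cons_cons] at hv
    rcases List.mem_append.mp hv with h | h
    · obtain ⟨v₁, hv₁, rfl⟩ := List.mem_map.mp h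
      rw [← hrep] at hv₁
      have ih := shuffle_b_bound t' (j+1) v₁ hv₁
      have hbv : Letter.b ∈ v₁ := b_mem_of_mem_shuffle_b (by omega) hv₁
      have hnall : ¬ (x = Letter.a ∧ trailA v₁ = v₁.length) := by
        rintro ⟨_, hc⟩
        exact not_allA_of_b_mem hbv hc
      rw [trailA_cons_of_ne hnall]
      constructor
      · exact le_trans ih.1 (trailA_le_trailA_cons x t')
      · intro heq
        -- trailA v₁ = trailA (x :: t')
        by_cases hcond : x = Letter.a ∧ trailA t' = t'.length
        · exfalso
          rw [trailA_cons, if_pos hcond] at heq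
          have h1 := ih.1
          have h2 := trailA_le_length t'
          omega
        · rw [trailA_cons_of_ne hcond] at heq
          have hlead := ih.2 heq
          cases x with
          | a => simp
          | b =>
            rw [leadB_cons_b, leadB_cons_b]
            omega
    · obtain ⟨v₂, hv₂, rfl⟩ := List.mem_map.mp h
      have ih := shuffle_b_bound (x :: t') j v₂ hv₂
      rw [trailA_cons_b]
      exact ⟨ih.1, fun heq => by have := ih.2 heq; rw [leadB_cons_b]; omega⟩
termination_by t j => t.length + j
decreasing_by all_goals simp

/-- B_eq : the unique maximal term in `t * b^j`. -/
lemma shuffle_b_max : ∀ (t : Word), leadB t = 0 → ∀ (j : ℕ),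
    (∀ v ∈ shuffleList t (rep j Letter.b), trailA v = trailA t → leadB v = j →
      v = rep j Letter.b ++ t)
    ∧ (shuffleList t (rep j Letter.b)).count (rep j Letter.b ++ t) = 1
  | [], _, j => by simp
  | x :: t', ht, 0 => by simp
  | x :: t', ht, j + 1 => by
    have hxb : x ≠ Letter.b := by
      intro h
      subst h
      rw [leadB_cons_b] at ht
      omega
    have hrep : rep (j+1) Letter.b = Letter.b :: rep j Letter.b := List.replicate_succ ..
    have ih := shuffle_b_max (x :: t') ht j
    constructor
    · intro v hv htv hlv
      rw [hrep, shuffleList_cons_cons] at hv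
      rcases List.mem_append.mp hv with h | h
      · obtain ⟨v₁, hv₁, rfl⟩ := List.mem_map.mp h
        exfalso
        cases x with
        | a => rw [leadB_cons_a] at hlv; omega
        | b => exact hxb rfl
      · obtain ⟨v₂, hv₂, rfl⟩ := List.mem_map.mp h
        rw [trailA_cons_b] at htv
        rw [leadB_cons_b] at hlv
        have := ih.1 v₂ hv₂ htv (by omega)
        rw [this, hrep]
        rfl
    · rw [hrep, shuffleList_cons_cons, List.count_append]
      have htarget : rep (j+1) Letter.b ++ (x :: t') = Letter.b :: (rep j Letter.b ++ (x :: t')) := by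
        rw [hrep]; rfl
      have h1 : List.count (rep (j+1) Letter.b ++ x :: t')
          (List.map (fun t => x :: t) (shuffleList t' (Letter.b :: rep j Letter.b))) = 0 := by
        rw [List.count_eq_zero]
        intro hmem
        obtain ⟨v₁, _, heq⟩ := List.mem_map.mp hmem
        have heq' : x :: v₁ = Letter.b :: (rep j Letter.b ++ (x :: t')) := by
          rw [← htarget]; exact heq
        exact hxb (List.cons_eq_cons.mp heq').1
      have h2 : List.count (rep (j+1) Letter.b ++ x :: t')
          (List.map (fun t => Letter.b :: t) (shuffleList (x :: t') (rep j Letter.b))) = 1 := by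
        rw [htarget]
        exact (count_map_cons Letter.b _ (rep j Letter.b ++ (x :: t'))).trans ih.2
      -- goal is in terms of the rewritten target
      have e1 : (rep (j+1) Letter.b ++ x :: t' : Word) = Letter.b :: rep j Letter.b ++ x :: t' := by
        rw [hrep]
      rw [← e1]
      omega
termination_by t _ j => t.length + j
decreasing_by all_goals simp

end Aux

namespace Aux

open Finsupp

lemma list_single_sum_apply (L : List Word) (u : Word) :
    ((L.map fun t => Finsupp.single t (1 : ℚ)).sum) u = (L.count u : ℚ) := by
  induction L with
  | nil => simp
  | cons t L ih =>
    rw [List.map_cons, List.sum_cons, Finsupp.add_apply, ih]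
    by_cases h : t = u
    · subst h
      simp [List.count_cons, add_comm]
    · simp [List.count_cons, Finsupp.single_apply, h, Ne.symm h]

lemma shW_apply (t v u : Word) : shW t v u = ((shuffleList t v).count u : ℚ) := by
  rw [shW]
  exact list_single_sum_apply _ u

lemma shW_apply_ne_zero {t v u : Word} (h : shW t v u ≠ 0) : u ∈ shuffleList t v := by
  rw [shW_apply] at h
  by_contra hc
  rw [List.count_eq_zero_of_not_mem hc] at h
  simp at h

lemma shH_single_single (u v : Word) (c d : ℚ) :
    shH (Finsupp.single u c) (Finsupp.single v d) = (c * d) • shW u v := by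
  rw [shH]
  rw [Finsupp.sum_single_index (by simp [Finsupp.sum_single_index])]
  rw [Finsupp.sum_single_index (by simp)]

lemma shH_smul_left (c : ℚ) (f g : H) : shH (c • f) g = c • shH f g := by
  rw [shH, shH, Finsupp.sum_smul_index (fun t => by simp [Finsupp.sum_single_index]),
    Finsupp.smul_sum]
  apply Finsupp.sum_congr
  intro u _
  rw [Finsupp.smul_sum]
  apply Finsupp.sum_congr
  intro v _
  rw [smul_smul, mul_assoc]

lemma shH_smul_right (c : ℚ) (f g : H) : shH f (c • g) = c • shH f g := by
  rw [shH, shH, Finsupp.smul_sum]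
  apply Finsupp.sum_congr
  intro u _
  rw [Finsupp.sum_smul_index (fun t => by simp), Finsupp.smul_sum]
  apply Finsupp.sum_congr
  intro v _
  rw [smul_smul, mul_left_comm]

lemma shuffleList_rep (c : Letter) : ∀ n : ℕ,
    shuffleList (rep n c) [c] = List.replicate (n+1) (rep (n+1) c)
  | 0 => by
    rw [show rep 0 c = ([] : Word) from rfl, shuffleList_nil_left]
    rfl
  | n+1 => by
    have hrep : rep (n+1) c = c :: rep n c := List.replicate_succ ..
    have hrep2 : rep (n+2) c = c :: rep (n+1) c := List.replicate_succ ..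
    rw [hrep, shuffleList_cons_cons, ← hrep, shuffleList_rep c n, shuffleList_nil_right]
    simp only [List.map_replicate, List.map_cons, List.map_nil]
    rw [← hrep2]
    exact (List.replicate_succ' ..).symm

lemma shPow_single (c : Letter) (n : ℕ) :
    shPow (Finsupp.single [c] 1) n = (n.factorial : ℚ) • Finsupp.single (rep n c) 1 := by
  induction n with
  | zero => simp [shPow]
  | succ n ih =>
    rw [shPow, ih, shH_smul_left, shH_single_single, one_mul, one_smul, shW, shuffleList_rep,
      List.map_replicate, List.sum_replicate, ← Nat.cast_smul_eq_nsmul ℚ, smul_smul]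
    congr 1
    rw [Nat.factorial_succ]
    push_cast
    ring

/-- `Ψ w i j = (w * a^{*i}) * b^j` where the last factor is a single word. -/
noncomputable def Psi (w : Word) (i j : ℕ) : H :=
  shH (shW w (rep i Letter.a)) (Finsupp.single (rep j Letter.b) 1)

lemma Phi_eq_Psi (w : Word) (i j : ℕ) :
    shH (shH (Finsupp.single w 1) (shPow (Finsupp.single [Letter.a] 1) i))
        (shPow (Finsupp.single [Letter.b] 1) j)
      = ((i.factorial * j.factorial : ℕ) : ℚ) • Psi w i j := by
  rw [shPow_single, shPow_single, shH_smul_right, shH_smul_right, shH_smul_left,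
    shH_single_single, one_mul, one_smul, Psi, smul_smul]
  push_cast
  ring_nf

lemma Psi_apply (w : Word) (i j : ℕ) (u : Word) :
    Psi w i j u = (shW w (rep i Letter.a)).sum
      (fun t ct => ct * ((shuffleList t (rep j Letter.b)).count u : ℚ)) := by
  rw [Psi, shH, Finsupp.sum_apply]
  apply Finsupp.sum_congr
  intro t _
  rw [Finsupp.sum_single_index (by simp), Finsupp.smul_apply, mul_one, smul_eq_mul]
  simp [shW_apply]

end Aux

namespace Aux

/-- The encoding `b^j ++ w ++ a^i`. -/
def enc (w : Word) (i j : ℕ) : Word := rep j Letter.b ++ (w ++ rep i Letter.a)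

lemma WPlusPlus_trailA {w : Word} (hw : WPlusPlus w) : trailA w = 0 :=
  trailA_eq_zero_iff.mpr hw.2

lemma WPlusPlus_leadB {w : Word} (hw : WPlusPlus w) : leadB w = 0 :=
  leadB_eq_zero_iff.mpr hw.1

lemma trailA_b_append {w : Word} (hw : trailA w = 0) (j : ℕ) :
    trailA (rep j Letter.b ++ w) = 0 := by
  rw [trailA_eq_zero_iff]
  cases hwe : w with
  | nil =>
    rw [List.append_nil]
    cases j with
    | zero => simp
    | succ j => rw [getLast?_replicate_succ]; simp
  | cons y w' =>
    rw [List.getLast?_append_of_ne_nil _ (by simp)]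
    rw [hwe] at hw
    exact trailA_eq_zero_iff.mp hw

lemma trailA_enc {w : Word} (hw : trailA w = 0) (i j : ℕ) : trailA (enc w i j) = i := by
  rw [enc, ← List.append_assoc, trailA_append_replicate, trailA_b_append hw]
  omega

@[simp] lemma leadB_replicate_a (i : ℕ) : leadB (rep i Letter.a) = 0 := by
  cases i with
  | zero => simp
  | succ i => rw [show rep (i+1) Letter.a = Letter.a :: rep i Letter.a from List.replicate_succ ..]; simp

lemma leadB_append_repa {w : Word} (hw : leadB w = 0) (i : ℕ) :
    leadB (w ++ rep i Letter.a) = 0 := by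
  cases w with
  | nil => simp
  | cons x w' =>
    cases x with
    | a => rfl
    | b => rw [leadB_cons_b] at hw; omega

lemma leadB_enc {w : Word} (hw : leadB w = 0) (i j : ℕ) : leadB (enc w i j) = j := by
  rw [enc, leadB_append_replicate, leadB_append_repa hw]
  omega

lemma trailA_w_append_a {w : Word} (hw : trailA w = 0) (i : ℕ) :
    trailA (w ++ rep i Letter.a) = i := by
  rw [trailA_append_replicate, hw]; omega

lemma Psi_apply_self {w : Word} (hw : WPlusPlus w) (i j : ℕ) :
    Psi w i j (enc w i j) = 1 := by
  have hta := WPlusPlus_trailA hw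
  have hlb := WPlusPlus_leadB hw
  have hlb0 : leadB (w ++ rep i Letter.a) = 0 := leadB_append_repa hlb i
  rw [Psi_apply, Finsupp.sum]
  rw [Finset.sum_eq_single (w ++ rep i Letter.a)]
  · rw [shW_apply, (shuffle_a_max w hta i).2]
    have h2 := (shuffle_b_max (w ++ rep i Letter.a) hlb0 j).2
    rw [show (enc w i j) = rep j Letter.b ++ (w ++ rep i Letter.a) from rfl, h2]
    norm_num
  · intro t hts hne
    have htmem : t ∈ shuffleList w (rep i Letter.a) :=
      shW_apply_ne_zero (Finsupp.mem_support_iff.mp hts)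
    have : (shuffleList t (rep j Letter.b)).count (enc w i j) = 0 := by
      rw [List.count_eq_zero]
      intro hmem
      have hb := (shuffle_b_bound t j (enc w i j) hmem).1
      rw [trailA_enc hta] at hb
      have hle := trailA_shuffle_a_le w i t htmem
      rw [hta] at hle
      have h1 : trailA t = i := by omega
      exact hne ((shuffle_a_max w hta i).1 t htmem h1)
    rw [this]
    norm_num
  · intro hns
    rw [Finsupp.notMem_support_iff.mp hns]
    ring

lemma Psi_support {w : Word} (hw : WPlusPlus w) (i j : ℕ) {u : Word}
    (hu : Psi w i j u ≠ 0) :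
    u = enc w i j ∨ toLex (trailA u, leadB u) < toLex (i, j) := by
  have hta := WPlusPlus_trailA hw
  have hlb := WPlusPlus_leadB hw
  rw [Psi_apply, Finsupp.sum] at hu
  have hex : ∃ t ∈ (shW w (rep i Letter.a)).support,
      (shW w (rep i Letter.a)) t * ((shuffleList t (rep j Letter.b)).count u : ℚ) ≠ 0 := by
    by_contra hc
    push_neg at hc
    exact hu (Finset.sum_eq_zero hc)
  obtain ⟨t, hts, htne⟩ := hex
  have htmem : t ∈ shuffleList w (rep i Letter.a) :=
    shW_apply_ne_zero (Finsupp.mem_support_iff.mp hts)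
  have humem : u ∈ shuffleList t (rep j Letter.b) := by
    by_contra hc
    rw [List.count_eq_zero_of_not_mem hc] at htne
    simp at htne
  have hbound := shuffle_b_bound t j u humem
  have htle := trailA_shuffle_a_le w i t htmem
  rw [hta] at htle
  by_cases hti : trailA u = i
  · have h1 : trailA t = i := by
      have := hbound.1
      omega
    have ht0 : t = w ++ rep i Letter.a := (shuffle_a_max w hta i).1 t htmem h1
    subst ht0
    have hlb0 : leadB (w ++ rep i Letter.a) = 0 := leadB_append_repa hlb i
    have h2 := hbound.2 (by omega)
    rw [hlb0] at h2
    by_cases hlj : leadB u = j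
    · left
      exact (shuffle_b_max _ hlb0 j).1 u humem (by omega) hlj
    · right
      rw [Prod.Lex.lt_iff]
      exact Or.inr ⟨hti, by show leadB u < j; omega⟩
  · right
    rw [Prod.Lex.lt_iff]
    simp only [ofLex_toLex]
    left
    omega

lemma exists_decomp_front : ∀ (u : Word), u.getLast? ≠ some Letter.a →
    ∃ w j, WPlusPlus w ∧ u = rep j Letter.b ++ w
  | [], _ => ⟨[], 0, ⟨by simp, by simp⟩, by simp⟩
  | Letter.a :: u', h => ⟨Letter.a :: u', 0, ⟨by simp, h⟩, by simp⟩
  | Letter.b :: u', h => by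
    cases hue : u' with
    | nil => exact ⟨[], 1, ⟨by simp, by simp⟩, by simp [List.replicate_succ]⟩
    | cons y u'' =>
      have h' : u'.getLast? ≠ some Letter.a := by
        rw [hue] at h ⊢
        rwa [List.getLast?_cons_cons] at h
      obtain ⟨w, j, hw, heq⟩ := exists_decomp_front u' h'
      exact ⟨w, j + 1, hw, by
        rw [show rep (j+1) Letter.b = Letter.b :: rep j Letter.b from List.replicate_succ ..]
        rw [← hue, heq]
        rfl⟩

lemma exists_decomp (u : Word) : ∃ w i j, WPlusPlus w ∧ u = enc w i j := by
  induction u using List.reverseRecOn with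
  | nil => exact ⟨[], 0, 0, ⟨by simp, by simp⟩, by simp [enc]⟩
  | append_singleton s x ih =>
    cases x with
    | a =>
      obtain ⟨w, i, j, hw, heq⟩ := ih
      refine ⟨w, i + 1, j, hw, ?_⟩
      rw [heq, enc, enc, List.append_assoc]
      congr 1
      rw [List.append_assoc]
      congr 1
      exact (List.replicate_succ' ..).symm
    | b =>
      have h : (s ++ [Letter.b]).getLast? ≠ some Letter.a := by
        rw [List.getLast?_append_of_ne_nil _ (by simp)]
        simp
      obtain ⟨w, j, hw, heq⟩ := exists_decomp_front (s ++ [Letter.b]) h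
      exact ⟨w, 0, j, hw, by rw [heq, enc]; simp⟩

end Aux

namespace Aux

/-- The generator `w * a^{*i} * b^{*j}`. -/
noncomputable def Phi (w : Word) (i j : ℕ) : H :=
  shH (shH (Finsupp.single w 1) (shPow (Finsupp.single [Letter.a] 1) i))
    (shPow (Finsupp.single [Letter.b] 1) j)

lemma Phi_eq (w : Word) (i j : ℕ) :
    Phi w i j = ((i.factorial * j.factorial : ℕ) : ℚ) • Psi w i j := Phi_eq_Psi w i j

lemma Phi_apply_self {w : Word} (hw : WPlusPlus w) (i j : ℕ) :
    Phi w i j (enc w i j) = ((i.factorial * j.factorial : ℕ) : ℚ) := by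
  rw [Phi_eq, Finsupp.smul_apply, Psi_apply_self hw, smul_eq_mul, mul_one]

lemma Phi_support {w : Word} (hw : WPlusPlus w) (i j : ℕ) {u : Word}
    (hu : Phi w i j u ≠ 0) :
    u = enc w i j ∨ toLex (trailA u, leadB u) < toLex (i, j) := by
  rw [Phi_eq, Finsupp.smul_apply, smul_eq_mul] at hu
  exact Psi_support hw i j (right_ne_zero_of_mul hu)

noncomputable def decompW (u : Word) : Word := (exists_decomp u).choose

lemma decomp_spec (u : Word) : WPlusPlus (decompW u) ∧
    u = enc (decompW u) (trailA u) (leadB u) := by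
  obtain ⟨i, j, hw, heq⟩ := (exists_decomp u).choose_spec
  refine ⟨hw, ?_⟩
  have hta : trailA u = i := by rw [heq]; exact trailA_enc (WPlusPlus_trailA hw) i j
  have hlb : leadB u = j := by rw [heq]; exact leadB_enc (WPlusPlus_leadB hw) i j
  rw [hta, hlb]
  exact heq

/-- The change of basis map `T : ℋ → ℋ` sending the basis word `b^j w a^i`
to `w * a^{*i} * b^{*j}`. -/
noncomputable def T : H →ₗ[ℚ] H :=
  Finsupp.linearCombination ℚ (fun u => Phi (decompW u) (trailA u) (leadB u))

lemma T_single (u : Word) : T (Finsupp.single u 1) = Phi (decompW u) (trailA u) (leadB u) := by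
  rw [T, Finsupp.linearCombination_single, one_smul]

lemma key_factorial_ne_zero (i j : ℕ) : ((i.factorial * j.factorial : ℕ) : ℚ) ≠ 0 := by
  positivity

lemma finsupp_eq_sum_smul_single (x : H) :
    x = x.sum fun v cv => cv • Finsupp.single v (1 : ℚ) := by
  conv_lhs => rw [← Finsupp.sum_single x]
  apply Finsupp.sum_congr
  intro v _
  rw [Finsupp.smul_single, smul_eq_mul, mul_one]

lemma T_injective : Function.Injective T := by
  rw [injective_iff_map_eq_zero]
  intro x hx
  by_contra hne
  set K : Finset (ℕ ×ₗ ℕ) := x.support.image (fun u => toLex (trailA u, leadB u)) with hK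
  have hKne : K.Nonempty := (Finsupp.support_nonempty_iff.mpr hne).image _
  obtain ⟨u, hus, huM⟩ := Finset.mem_image.mp (Finset.max'_mem K hKne)
  have hmax : ∀ v ∈ x.support, toLex (trailA v, leadB v) ≤ toLex (trailA u, leadB u) := by
    intro v hv
    rw [huM]
    have hmem : toLex (trailA v, leadB v) ∈ K := by
      rw [hK]
      exact Finset.mem_image_of_mem _ hv
    exact Finset.le_max' K _ hmem
  have hTx : T x (enc (decompW u) (trailA u) (leadB u)) ≠ 0 := by
    rw [T, Finsupp.linearCombination_apply, Finsupp.sum, Finsupp.finset_sum_apply]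
    rw [Finset.sum_eq_single u]
    · rw [Finsupp.smul_apply, Phi_apply_self (decomp_spec u).1, smul_eq_mul]
      exact mul_ne_zero (Finsupp.mem_support_iff.mp hus) (key_factorial_ne_zero _ _)
    · intro v hvs hvne
      rw [Finsupp.smul_apply, smul_eq_mul]
      rcases eq_or_ne (Phi (decompW v) (trailA v) (leadB v) (enc (decompW u) (trailA u) (leadB u))) 0 with h0 | h0
      · rw [h0, mul_zero]
      · exfalso
        rcases Phi_support (decomp_spec v).1 (trailA v) (leadB v) h0 with heq | hlt
        · -- enc u's decomposition equals enc v's decomposition, so u = v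
          apply hvne
          have hu' := (decomp_spec u).2
          have hv' := (decomp_spec v).2
          rw [← hu'] at heq
          exact hv'.trans heq.symm
        · -- key of enc u... is key u, which is ≤ key v, contradiction
          have : toLex (trailA (enc (decompW u) (trailA u) (leadB u)),
              leadB (enc (decompW u) (trailA u) (leadB u))) = toLex (trailA u, leadB u) := by
            rw [← (decomp_spec u).2]
          rw [this] at hlt
          exact absurd (hmax v hvs) (not_le_of_gt hlt)
    · intro hns
      rw [Finsupp.notMem_support_iff.mp hns, zero_smul, Finsupp.zero_apply]
  rw [hx] at hTx
  simp at hTx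

lemma single_mem_range (u : Word) : Finsupp.single u (1 : ℚ) ∈ LinearMap.range T := by
  have H : ∀ p : ℕ ×ₗ ℕ, ∀ u : Word, toLex (trailA u, leadB u) = p →
      Finsupp.single u (1 : ℚ) ∈ LinearMap.range T := by
    intro p
    induction p using WellFoundedLT.induction with
    | _ p ih =>
      intro u hu
      set c := (((trailA u).factorial * (leadB u).factorial : ℕ) : ℚ) with hc
      have hcne : c ≠ 0 := key_factorial_ne_zero _ _
      set F := T (Finsupp.single u (1 : ℚ)) with hF
      set E := F - c • Finsupp.single u (1 : ℚ) with hE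
      have hFu : F = Phi (decompW u) (trailA u) (leadB u) := T_single u
      have hEsupp : ∀ v, E v ≠ 0 → toLex (trailA v, leadB v) < p := by
        intro v hv
        rw [hE, Finsupp.sub_apply, Finsupp.smul_apply] at hv
        by_cases hvu : v = u
        · exfalso
          apply hv
          rw [hvu, hFu, Finsupp.single_eq_same, smul_eq_mul, mul_one]
          have hself : Phi (decompW u) (trailA u) (leadB u) u = c := by
            have h2 := Phi_apply_self (decomp_spec u).1 (trailA u) (leadB u)
            rw [← (decomp_spec u).2] at h2
            exact h2
          rw [hself, sub_self]
        · have hFv : F v ≠ 0 := by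
            intro h0
            apply hv
            rw [h0, Finsupp.single_eq_of_ne' (Ne.symm hvu), smul_zero, sub_zero]
          rw [hFu] at hFv
          rcases Phi_support (decomp_spec u).1 (trailA u) (leadB u) hFv with heq | hlt
          · exact absurd (heq.trans ((decomp_spec u).2).symm) hvu
          · rw [hu] at hlt
            exact hlt
      have hEmem : E ∈ LinearMap.range T := by
        rw [finsupp_eq_sum_smul_single E]
        apply Submodule.finsuppSum_mem
        intro v hv
        exact Submodule.smul_mem _ _ (ih _ (hEsupp v hv) v rfl)
      have hsingle : Finsupp.single u (1 : ℚ) = c⁻¹ • (F - E) := by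
        rw [hE]
        rw [sub_sub_cancel, smul_smul, inv_mul_cancel₀ hcne, one_smul]
      rw [hsingle]
      exact Submodule.smul_mem _ _ (Submodule.sub_mem _ (LinearMap.mem_range_self T _) hEmem)
  exact H _ u rfl

lemma T_surjective : Function.Surjective T := by
  rw [← LinearMap.range_eq_top]
  rw [eq_top_iff]
  intro x _
  rw [finsupp_eq_sum_smul_single x]
  exact Submodule.finsuppSum_mem _ _ _ _ fun v _ => Submodule.smul_mem _ _ (single_mem_range v)

end Aux

namespace Aux

/-- Key classes of words. -/
def S (p : ℕ × ℕ) : Set Word := {u | trailA u = p.1 ∧ leadB u = p.2}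

lemma base_internal : DirectSum.IsInternal (fun p : ℕ × ℕ => Finsupp.supported ℚ ℚ (S p)) := by
  rw [DirectSum.isInternal_submodule_iff_iSupIndep_and_iSup_eq_top]
  constructor
  · intro p
    have hle : (⨆ (q : ℕ × ℕ) (_ : q ≠ p), Finsupp.supported ℚ ℚ (S q)) ≤
        Finsupp.supported ℚ ℚ (⋃ (q : ℕ × ℕ) (_ : q ≠ p), S q) :=
      iSup₂_le fun q hq => Finsupp.supported_mono (Set.subset_iUnion₂ (s := fun q _ => S q) q hq)
    refine Disjoint.mono_right hle (Finsupp.disjoint_supported_supported ?_)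
    rw [Set.disjoint_left]
    rintro u ⟨h1, h2⟩ hu2
    simp only [Set.mem_iUnion] at hu2
    obtain ⟨q, hq, hq1, hq2⟩ := hu2
    exact hq (Prod.ext (hq1.symm.trans h1) (hq2.symm.trans h2))
  · rw [eq_top_iff, ← Finsupp.supported_univ (M := ℚ) (R := ℚ) (α := Word)]
    have huniv : (Set.univ : Set Word) = ⋃ p : ℕ × ℕ, S p := by
      ext u
      simp only [Set.mem_univ, Set.mem_iUnion, true_iff]
      exact ⟨(trailA u, leadB u), rfl, rfl⟩
    rw [huniv, Finsupp.supported_iUnion]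

lemma enc_injective_w {w w' : Word} {i j : ℕ} (h : enc w i j = enc w' i j) : w = w' := by
  rw [enc, enc] at h
  exact List.append_cancel_right (List.append_cancel_left h)

lemma decompW_enc {w : Word} (hw : WPlusPlus w) (i j : ℕ) : decompW (enc w i j) = w := by
  have hti := trailA_enc (WPlusPlus_trailA hw) i j
  have hlj := leadB_enc (WPlusPlus_leadB hw) i j
  have hspec := (decomp_spec (enc w i j)).2
  rw [hti, hlj] at hspec
  exact (enc_injective_w hspec.symm)

lemma SHab_eq_map (p : ℕ × ℕ) :
    SHab p = Submodule.map T (Finsupp.supported ℚ ℚ (S p)) := by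
  apply le_antisymm
  · rw [SHab, Submodule.span_le]
    rintro x ⟨w, hw, rfl⟩
    have hti := trailA_enc (WPlusPlus_trailA hw) p.1 p.2
    have hlj := leadB_enc (WPlusPlus_leadB hw) p.1 p.2
    refine ⟨Finsupp.single (enc w p.1 p.2) 1, ?_, ?_⟩
    · exact Finsupp.single_mem_supported ℚ 1 ⟨hti, hlj⟩
    · rw [T_single, hti, hlj, decompW_enc hw]
      rfl
  · rintro x ⟨y, hy, rfl⟩
    have hsupp := Finsupp.mem_supported ℚ y |>.mp hy
    rw [finsupp_eq_sum_smul_single y, map_finsuppSum]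
    apply Submodule.finsuppSum_mem
    intro v hv
    rw [LinearMap.map_smul]
    apply Submodule.smul_mem
    rw [T_single]
    have hvS : v ∈ S p := hsupp (Finsupp.mem_support_iff.mpr hv)
    obtain ⟨h1, h2⟩ := hvS
    rw [h1, h2]
    exact Submodule.subset_span ⟨decompW v, (decomp_spec v).1, rfl⟩

end Aux

/-- `ℋ` is the direct sum over `i, j ≥ 0` of the subspaces `ℋ⁺⁺ * a^{*i} * b^{*j}`;
equivalently, the map `ℋ⁺⁺ ⊗ ℚ[X,Y] → ℋ`, `h ⊗ XⁱYʲ ↦ h * a^{*i} * b^{*j}`, is a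
vector-space isomorphism. -/
theorem statement11 : DirectSum.IsInternal fun p : ℕ × ℕ => SHab p := by
  rw [DirectSum.isInternal_submodule_iff_iSupIndep_and_iSup_eq_top]
  obtain ⟨hind, hsup⟩ :=
    (DirectSum.isInternal_submodule_iff_iSupIndep_and_iSup_eq_top _).mp Aux.base_internal
  have hbij : Function.Bijective Aux.T := ⟨Aux.T_injective, Aux.T_surjective⟩
  have heq : (fun p : ℕ × ℕ => SHab p) =
      (Submodule.orderIsoMapComapOfBijective Aux.T hbij ∘
        fun p : ℕ × ℕ => Finsupp.supported ℚ ℚ (Aux.S p)) := by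
    funext p
    rw [Function.comp_apply, Submodule.orderIsoMapComapOfBijective_apply, Aux.SHab_eq_map]
  constructor
  · rw [heq]
    exact hind.map_orderIso _
  · rw [heq]
    have : (⨆ p : ℕ × ℕ, (Submodule.orderIsoMapComapOfBijective Aux.T hbij ∘
        fun p : ℕ × ℕ => Finsupp.supported ℚ ℚ (Aux.S p)) p) =
        ⨆ p : ℕ × ℕ, Submodule.map Aux.T (Finsupp.supported ℚ ℚ (Aux.S p)) := rfl
    rw [this, ← Submodule.map_iSup, hsup, Submodule.map_top, LinearMap.range_eq_top.mpr
      Aux.T_surjective]
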